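/- Any homogeneous polynomial f of degree d in n variables that is a nonnegative linear combination of Schur polynomials f = Σ_μ c_μ s_μ with c_{(d)} > 0 has support equal to the set of all nonnegative integer vectors with coordinate sum d; in particular, f is SNP. -/

import Mathlib

open Finset

/-- The number of cells of the tableau `T` whose entry equals `v`. -/
def contentCount {μ : YoungDiagram} (T : SemistandardYoungTableau μ) (v : ℕ) : ℕ :=
  (μ.cells.filter fun c => T c.1 c.2 = v).card

/-- The Kostka number `K_{lam,mu}`: the number of semistandard Young tableaux of shape
`lam` and content `mu` (entries `0`-based). -/
noncomputable def kostka (lam : YoungDiagram) (mu : ℕ → ℕ) : ℕ :=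
  Set.ncard {T : SemistandardYoungTableau lam | ∀ v : ℕ, contentCount T v = mu v}

/-- The Schur polynomial `s_lam(x_1, …, x_n)`, via its monomial expansion
`s_lam = ∑_α K_{lam,α} x^α` over all exponent vectors `α` of total degree `|lam|`. -/
noncomputable def schur (lam : YoungDiagram) (n : ℕ) : MvPolynomial (Fin n) ℝ :=
  ∑ α ∈ Finset.Nat.antidiagonalTuple n lam.card,
    (kostka lam (fun v => if h : v < n then α ⟨v, h⟩ else 0) : ℝ) •
      ∏ i, MvPolynomial.X i ^ α i

/-- The permutahedron `P_lam ⊆ ℝ^n`. -/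
noncomputable def permutahedron (n : ℕ) (lam : ℕ → ℕ) : Set (Fin n → ℝ) :=
  convexHull ℝ {v | ∃ σ : Equiv.Perm (Fin n), v = fun i => (lam (σ i : ℕ) : ℝ)}

/-- The Newton polytope of a polynomial: the convex hull of its exponent vectors. -/
noncomputable def newtonPolytope {n : ℕ} (f : MvPolynomial (Fin n) ℝ) : Set (Fin n → ℝ) :=
  convexHull ℝ {v | ∃ α ∈ f.support, v = fun i => ((α i : ℕ) : ℝ)}

/-- `f` has a saturated Newton polytope: the lattice points of `Newton(f)` are
exactly the exponent vectors in the support of `f`. -/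
def SNP {n : ℕ} (f : MvPolynomial (Fin n) ℝ) : Prop :=
  ∀ α : Fin n → ℕ,
    ((fun i => (α i : ℝ)) ∈ newtonPolytope f ↔ ∃ β ∈ f.support, ∀ i, β i = α i)

/-- The one-row Young diagram `(d)`. -/
def oneRow (d : ℕ) : YoungDiagram :=
  YoungDiagram.ofRowLens [d] (List.pairwise_singleton _ d).sortedGE

lemma mem_oneRow {d : ℕ} {c : ℕ × ℕ} : c ∈ oneRow d ↔ c.1 = 0 ∧ c.2 < d := by
  rw [oneRow, YoungDiagram.mem_ofRowLens]
  constructor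
  · rintro ⟨h, h2⟩
    simp only [List.length_singleton, Nat.lt_one_iff] at h
    exact ⟨h, by simpa [h] using h2⟩
  · rintro ⟨h1, h2⟩
    exact ⟨by simp [h1], by simpa [h1] using h2⟩

lemma cells_oneRow (d : ℕ) : (oneRow d).cells
    = (range d).map ⟨fun j => (0, j), fun a b h => by simpa using h⟩ := by
  ext c
  simp only [YoungDiagram.mem_cells, mem_oneRow, mem_map, mem_range, Function.Embedding.coeFn_mk]
  constructor
  · rintro ⟨h1, h2⟩; exact ⟨c.2, h2, by rw [← h1]; rfl⟩
  · rintro ⟨j, hj, rfl⟩; exact ⟨rfl, hj⟩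

lemma card_oneRow (d : ℕ) : (oneRow d).card = d := by
  rw [YoungDiagram.card, cells_oneRow, Finset.card_map, Finset.card_range]

lemma downclosed_eq_range {s : Finset ℕ}
    (hdc : ∀ j ∈ s, ∀ k ≤ j, k ∈ s) : s = range s.card := by
  ext j
  simp only [mem_range]
  constructor
  · intro hj
    have h1 : range (j+1) ⊆ s := fun k hk => hdc j hj k (by simpa [Nat.lt_succ_iff] using hk)
    have := Finset.card_le_card h1
    simpa using this
  · intro hj
    by_contra hns
    have h1 : s ⊆ range j := by
      intro k hk
      simp only [mem_range]
      by_contra hkj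
      exact hns (hdc k hk j (le_of_not_gt hkj))
    exact absurd (Finset.card_le_card h1) (by rw [Finset.card_range]; omega)

def Npart (g : ℕ → ℕ) (v : ℕ) : ℕ := ∑ u ∈ range v, g u

lemma Npart_mono (g : ℕ → ℕ) : Monotone (Npart g) := fun _ _ h =>
  Finset.sum_le_sum_of_subset (range_subset_range.2 h)

lemma Npart_eq (g : ℕ → ℕ) (m : ℕ) (hz : ∀ v, m ≤ v → g v = 0) {k : ℕ} (hk : m ≤ k) :
    Npart g k = Npart g m :=
  (Finset.sum_subset (range_subset_range.2 hk) (fun x hx hnx => hz x (by simp at hx hnx; omega))).symm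

lemma Npart_le (g : ℕ → ℕ) (m : ℕ) (hz : ∀ v, m ≤ v → g v = 0) (w : ℕ) :
    Npart g w ≤ Npart g m := by
  rcases le_total w m with h | h
  · exact Npart_mono g h
  · exact le_of_eq (Npart_eq g m hz h)

def tf (g : ℕ → ℕ) (m j : ℕ) : ℕ :=
  Nat.find (⟨m, Or.inr le_rfl⟩ : ∃ v, j < Npart g (v+1) ∨ m ≤ v)

lemma tf_le_iff (g : ℕ → ℕ) (m : ℕ) (hz : ∀ v, m ≤ v → g v = 0) {j : ℕ}
    (hj : j < Npart g m) (v : ℕ) : tf g m j ≤ v ↔ j < Npart g (v+1) := by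
  constructor
  · intro h
    have hspec : j < Npart g (tf g m j + 1) ∨ m ≤ tf g m j :=
      Nat.find_spec (⟨m, Or.inr le_rfl⟩ : ∃ v, j < Npart g (v+1) ∨ m ≤ v)
    rcases hspec with h1 | h1
    · exact lt_of_lt_of_le h1 (Npart_mono g (by omega))
    · have hm : m ≤ v + 1 := le_trans h1 (le_trans h (Nat.le_succ v))
      rw [Npart_eq g m hz hm]
      exact hj
  · intro h
    exact Nat.find_le (Or.inl h)

lemma tf_lt_iff (g : ℕ → ℕ) (m : ℕ) (hz : ∀ v, m ≤ v → g v = 0) {j : ℕ}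
    (hj : j < Npart g m) (v : ℕ) : tf g m j < v ↔ j < Npart g v := by
  cases v with
  | zero => simp [Npart]
  | succ v => rw [Nat.lt_succ_iff, tf_le_iff g m hz hj]

def rowEntry (g : ℕ → ℕ) (m i j : ℕ) : ℕ :=
  if i = 0 ∧ j < Npart g m then tf g m j else 0

def rowTab (g : ℕ → ℕ) (m : ℕ) (hz : ∀ v, m ≤ v → g v = 0) :
    SemistandardYoungTableau (oneRow (Npart g m)) where
  entry := rowEntry g m
  row_weak' := by
    intro i j1 j2 h hm
    rw [mem_oneRow] at hm
    obtain ⟨hi, hj2⟩ := hm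
    have hi' : i = 0 := hi
    subst hi'
    have hj2' : j2 < Npart g m := hj2
    have hj1 : j1 < Npart g m := h.trans hj2'
    rw [rowEntry, rowEntry, if_pos ⟨rfl, hj1⟩, if_pos ⟨rfl, hj2'⟩]
    rw [tf_le_iff g m hz hj1]
    have := (tf_le_iff g m hz hj2' (tf g m j2)).1 le_rfl
    omega
  col_strict' := by
    intro i1 i2 j h hm
    rw [mem_oneRow] at hm
    omega
  zeros' := by
    intro i j hm
    rw [mem_oneRow] at hm
    exact if_neg hm

lemma rowTab_apply (g : ℕ → ℕ) (m : ℕ) (hz : ∀ v, m ≤ v → g v = 0) (i j : ℕ) :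
    (rowTab g m hz) i j = if i = 0 ∧ j < Npart g m then tf g m j else 0 := rfl

lemma contentCount_oneRow {d : ℕ} (T : SemistandardYoungTableau (oneRow d)) (v : ℕ) :
    contentCount T v = ((range d).filter fun j => T 0 j = v).card := by
  rw [contentCount, cells_oneRow, Finset.filter_map, Finset.card_map]
  congr 1

lemma count_tf (g : ℕ → ℕ) (m : ℕ) (hz : ∀ v, m ≤ v → g v = 0) (v : ℕ) :
    ((range (Npart g m)).filter fun j => tf g m j = v).card = g v := by
  have key : ((range (Npart g m)).filter fun j => tf g m j = v)
      = range (Npart g (v+1)) \ range (Npart g v) := by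
    ext j
    simp only [mem_filter, mem_range, mem_sdiff]
    constructor
    · rintro ⟨hj, rfl⟩
      exact ⟨(tf_lt_iff g m hz hj _).1 (Nat.lt_succ_self _),
        fun h => absurd ((tf_lt_iff g m hz hj _).2 h) (lt_irrefl _)⟩
    · rintro ⟨h1, h2⟩
      have hj : j < Npart g m := lt_of_lt_of_le h1 (Npart_le g m hz _)
      have ht1 : tf g m j < v + 1 := (tf_lt_iff g m hz hj _).2 h1
      have ht2 : ¬ tf g m j < v := fun hh => h2 ((tf_lt_iff g m hz hj _).1 hh)
      exact ⟨hj, by omega⟩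
  rw [key, Finset.card_sdiff_of_subset (Finset.range_subset_range.2 (Npart_mono g (Nat.le_succ v))),
    Finset.card_range, Finset.card_range]
  simp [Npart, Finset.sum_range_succ]

lemma contentCount_rowTab (g : ℕ → ℕ) (m : ℕ) (hz : ∀ v, m ≤ v → g v = 0) (v : ℕ) :
    contentCount (rowTab g m hz) v = g v := by
  rw [contentCount_oneRow]
  rw [show ((range (Npart g m)).filter fun j => (rowTab g m hz) 0 j = v)
      = ((range (Npart g m)).filter fun j => tf g m j = v) from ?_, count_tf g m hz]
  apply Finset.filter_congr
  intro j hj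
  simp only [mem_range] at hj
  rw [rowTab_apply, if_pos ⟨rfl, hj⟩]

lemma unique_rowTab (g : ℕ → ℕ) (m : ℕ) (hz : ∀ v, m ≤ v → g v = 0)
    (T : SemistandardYoungTableau (oneRow (Npart g m)))
    (hT : ∀ v, contentCount T v = g v) : T = rowTab g m hz := by
  have hcount : ∀ v, ((range (Npart g m)).filter fun j => T 0 j = v).card = g v := by
    intro v; rw [← contentCount_oneRow]; exact hT v
  have hmono : ∀ j1 j2, j1 ≤ j2 → j2 < Npart g m → T 0 j1 ≤ T 0 j2 := by
    intro j1 j2 h hj2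
    rcases lt_or_eq_of_le h with h | h
    · exact T.row_weak h (mem_oneRow.2 ⟨rfl, hj2⟩)
    · rw [h]
  have hB : ∀ v, ((range (Npart g m)).filter fun j => T 0 j < v).card = Npart g v := by
    intro v
    induction v with
    | zero => simp [Npart]
    | succ v ih =>
      have hsplit : ((range (Npart g m)).filter fun j => T 0 j < v + 1)
          = ((range (Npart g m)).filter fun j => T 0 j < v)
            ∪ ((range (Npart g m)).filter fun j => T 0 j = v) := by
        ext j
        simp only [mem_filter, mem_union, Nat.lt_succ_iff_lt_or_eq, and_or_left]
      have hdisj : Disjoint ((range (Npart g m)).filter fun j => T 0 j < v)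
          ((range (Npart g m)).filter fun j => T 0 j = v) := by
        rw [Finset.disjoint_left]
        rintro j hj1 hj2
        simp only [mem_filter] at hj1 hj2
        omega
      rw [hsplit, Finset.card_union_of_disjoint hdisj, ih, hcount]
      simp [Npart, Finset.sum_range_succ]
  have hdown : ∀ v, ((range (Npart g m)).filter fun j => T 0 j < v) = range (Npart g v) := by
    intro v
    have hdc : ∀ j ∈ (range (Npart g m)).filter fun j => T 0 j < v, ∀ k ≤ j,
        k ∈ (range (Npart g m)).filter fun j => T 0 j < v := by
      intro j hj k hk
      simp only [mem_filter, mem_range] at hj ⊢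
      exact ⟨lt_of_le_of_lt hk hj.1, lt_of_le_of_lt (hmono k j hk hj.1) hj.2⟩
    rw [downclosed_eq_range hdc, hB]
  have hkey : ∀ j, j < Npart g m → ∀ v, (T 0 j < v ↔ j < Npart g v) := by
    intro j hj v
    have := Finset.ext_iff.1 (hdown v) j
    simp only [mem_filter, mem_range] at this
    constructor
    · intro h; exact this.1 ⟨hj, h⟩
    · intro h; exact (this.2 h).2
  have hent : ∀ j, j < Npart g m → T 0 j = tf g m j := by
    intro j hj
    have h1 : T 0 j < tf g m j + 1 :=
      (hkey j hj _).2 ((tf_lt_iff g m hz hj _).1 (Nat.lt_succ_self _))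
    have h2 : tf g m j < T 0 j + 1 :=
      (tf_lt_iff g m hz hj _).2 ((hkey j hj _).1 (Nat.lt_succ_self _))
    omega
  refine DFunLike.ext _ _ fun i => funext fun j => ?_
  rw [rowTab_apply]
  by_cases hm : i = 0 ∧ j < Npart g m
  · obtain ⟨hi, hj⟩ := hm
    subst hi
    rw [if_pos ⟨rfl, hj⟩]
    exact hent j hj
  · rw [if_neg hm]
    have hm' : (i, j) ∉ oneRow (Npart g m) := fun h => hm (mem_oneRow.1 h)
    exact T.zeros' hm'

lemma kostka_oneRow (g : ℕ → ℕ) (m : ℕ) (hz : ∀ v, m ≤ v → g v = 0) :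
    kostka (oneRow (Npart g m)) g = 1 := by
  rw [kostka]
  have h : {T : SemistandardYoungTableau (oneRow (Npart g m)) | ∀ v : ℕ, contentCount T v = g v}
      = {rowTab g m hz} :=
    Set.eq_singleton_iff_unique_mem.2 ⟨contentCount_rowTab g m hz,
      fun T hT => unique_rowTab g m hz T hT⟩
  rw [h, Set.ncard_singleton]

lemma prod_X_pow (n : ℕ) (α : Fin n → ℕ) :
    (∏ i, (MvPolynomial.X i : MvPolynomial (Fin n) ℝ) ^ α i)
      = MvPolynomial.monomial (Finsupp.equivFunOnFinite.symm α) 1 := by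
  rw [← MvPolynomial.prod_X_pow_eq_monomial]
  have heq : ∏ i, (MvPolynomial.X i : MvPolynomial (Fin n) ℝ) ^ α i
      = ∏ x ∈ Finset.univ, MvPolynomial.X x ^ ((Finsupp.equivFunOnFinite.symm α) x) := rfl
  rw [heq]
  refine (Finset.prod_subset (Finset.subset_univ _) ?_).symm
  intro x _ hx
  have h0 : (Finsupp.equivFunOnFinite.symm α) x = 0 := by
    simpa [Finsupp.mem_support_iff] using hx
  rw [h0, pow_zero]

lemma coeff_schur (lam : YoungDiagram) (n : ℕ) (β : Fin n →₀ ℕ) :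
    MvPolynomial.coeff β (schur lam n) =
      if ∑ i, β i = lam.card then
        (kostka lam (fun v => if h : v < n then β ⟨v, h⟩ else 0) : ℝ)
      else 0 := by
  rw [schur, MvPolynomial.coeff_sum]
  have hterm : ∀ α : Fin n → ℕ, MvPolynomial.coeff β
      ((kostka lam (fun v => if h : v < n then α ⟨v, h⟩ else 0) : ℝ) •
        ∏ i, MvPolynomial.X i ^ α i)
      = if α = ⇑β then
          (kostka lam (fun v => if h : v < n then β ⟨v, h⟩ else 0) : ℝ) else 0 := by
    intro α
    rw [MvPolynomial.coeff_smul, prod_X_pow, MvPolynomial.coeff_monomial]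
    have hiff : (Finsupp.equivFunOnFinite.symm α = β) ↔ α = ⇑β := by
      rw [Equiv.symm_apply_eq]
      exact Iff.rfl
    by_cases h : α = ⇑β
    · rw [if_pos (hiff.2 h), if_pos h, smul_eq_mul, mul_one, h]
    · rw [if_neg (fun hh => h (hiff.1 hh)), if_neg h, smul_eq_mul, mul_zero]
  rw [Finset.sum_congr rfl (fun α _ => hterm α), Finset.sum_ite_eq' _ ⇑β]
  simp only [Finset.Nat.mem_antidiagonalTuple]


/-- a homogeneous degree-`d` polynomial `f = ∑_μ c_μ s_μ` in `n` variables
with all `c_μ ≥ 0` and `c_{(d)} > 0` has support equal to the set of all exponent vectors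
with coordinate sum `d`; in particular `f` is SNP. -/
theorem stmt14 (n d : ℕ) (S : Finset YoungDiagram) (hS : ∀ μ ∈ S, μ.card = d)
    (c : YoungDiagram → ℝ) (hc : ∀ μ, 0 ≤ c μ)
    (hrow : oneRow d ∈ S) (hcrow : 0 < c (oneRow d)) :
    (∀ α : Fin n →₀ ℕ, α ∈ (∑ μ ∈ S, c μ • schur μ n).support ↔ ∑ i, α i = d) ∧
      SNP (∑ μ ∈ S, c μ • schur μ n) := by
  set f := ∑ μ ∈ S, c μ • schur μ n with hf
  have hcoeff : ∀ β : Fin n →₀ ℕ, MvPolynomial.coeff β f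
      = ∑ μ ∈ S, c μ * (if ∑ i, β i = μ.card then
          (kostka μ (fun v => if h : v < n then β ⟨v, h⟩ else 0) : ℝ) else 0) := by
    intro β
    rw [hf, MvPolynomial.coeff_sum]
    exact Finset.sum_congr rfl fun μ _ => by
      rw [MvPolynomial.coeff_smul, smul_eq_mul, coeff_schur]
  have hkost : ∀ β : Fin n →₀ ℕ, ∑ i, β i = d →
      kostka (oneRow d) (fun v => if h : v < n then β ⟨v, h⟩ else 0) = 1 := by
    intro β hsum
    set g : ℕ → ℕ := fun v => if h : v < n then β ⟨v, h⟩ else 0 with hg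
    have hz : ∀ v, n ≤ v → g v = 0 := fun v hv => dif_neg (by omega)
    have hN : Npart g n = d := by
      rw [Npart, ← Fin.sum_univ_eq_sum_range g n, ← hsum]
      apply Finset.sum_congr rfl
      intro i _
      show (if h : (i : ℕ) < n then β ⟨↑i, h⟩ else 0) = β i
      rw [dif_pos i.isLt]
    calc kostka (oneRow d) g = kostka (oneRow (Npart g n)) g := by rw [hN]
      _ = 1 := kostka_oneRow g n hz
  have hsupp : ∀ β : Fin n →₀ ℕ, β ∈ f.support ↔ ∑ i, β i = d := by
    intro β
    rw [MvPolynomial.mem_support_iff]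
    constructor
    · intro hne
      by_contra hsum
      apply hne
      rw [hcoeff]
      apply Finset.sum_eq_zero
      intro μ hμ
      rw [if_neg (by rw [hS μ hμ]; exact hsum), mul_zero]
    · intro hsum
      have hpos : 0 < MvPolynomial.coeff β f := by
        rw [hcoeff]
        apply Finset.sum_pos'
        · intro μ _
          apply mul_nonneg (hc μ)
          split_ifs
          · exact Nat.cast_nonneg _
          · exact le_refl 0
        · refine ⟨oneRow d, hrow, ?_⟩
          rw [card_oneRow, if_pos hsum, hkost β hsum]
          simpa using hcrow
      exact ne_of_gt hpos
  refine ⟨hsupp, ?_⟩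
  intro α
  constructor
  · intro hmem
    have hH : Convex ℝ {v : Fin n → ℝ | ∑ i, v i = (d : ℝ)} := by
      intro x hx y hy a b ha hb hab
      simp only [Set.mem_setOf_eq] at hx hy ⊢
      simp only [Pi.add_apply, Pi.smul_apply, smul_eq_mul]
      rw [Finset.sum_add_distrib, ← Finset.mul_sum, ← Finset.mul_sum, hx, hy, ← add_mul,
        hab, one_mul]
    have hsub : newtonPolytope f ⊆ {v : Fin n → ℝ | ∑ i, v i = (d : ℝ)} := by
      rw [newtonPolytope]
      apply convexHull_min ?_ hH
      rintro v ⟨β, hβ, rfl⟩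
      have hd := (hsupp β).1 hβ
      simp only [Set.mem_setOf_eq]
      exact_mod_cast congrArg (Nat.cast : ℕ → ℝ) hd
    have hsum : ∑ i, α i = d := by
      have h := hsub hmem
      simp only [Set.mem_setOf_eq] at h
      exact_mod_cast h
    refine ⟨Finsupp.equivFunOnFinite.symm α, ?_, fun i => rfl⟩
    rw [hsupp]
    exact hsum
  · rintro ⟨β, hβ, hβα⟩
    exact subset_convexHull ℝ _ ⟨β, hβ, funext fun i => (congrArg _ (hβα i)).symm⟩
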